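/- Let A = x y* + σ x'(y')* ∈ Mₙ(ℂ) where (x, x') and (y, y') are orthonormal pairs and |σ| < 1. Then the Birkhoff–James outgoing neighborhood of A equals that of x y*: for all B ∈ Mₙ(ℂ), A ⊥ B if and only if x* B y = 0. -/

import Mathlib

set_option maxHeartbeats 1000000

lemma case2_arith (A B s Q t M d bb C : ℝ)
    (hA0 : 0 ≤ A) (hA1 : A ≤ 1) (hB0 : 0 ≤ B) (hBd : B ≤ d) (hAB : A ^ 2 + B ^ 2 ≤ 1)
    (hs0 : 0 ≤ s) (hQ : Q = 1 - t * bb) (hsQ : s ≤ Q) (hQ0 : 0 ≤ Q)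
    (ht : 0 < t) (hM : 0 < M) (hd0 : 0 < d) (hd1 : d ≤ 1)
    (hdbb : 2 * M * (1 + 2 * s) * d ≤ bb) (hC : C = bb ^ 2 + 5 * M ^ 2)
    (htC : t * C ≤ bb / 2) :
    (A * Q + t * (M * d)) ^ 2 + (s * B + t * (2 * M)) ^ 2 ≤ 1 - t * bb / 2 := by
  have hbb0 : 0 < bb := lt_of_lt_of_le (by positivity) hdbb
  have hQ1 : Q ≤ 1 := by
    have := mul_pos ht hbb0
    rw [hQ]; linarith only [this]
  have hB2 : B ^ 2 ≤ 1 - A ^ 2 := by linarith only [hAB]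
  have hs2Q2 : s ^ 2 ≤ Q ^ 2 := pow_le_pow_left₀ hs0 hsQ 2
  have G1 : s ^ 2 * B ^ 2 ≤ Q ^ 2 * B ^ 2 := mul_le_mul_of_nonneg_right hs2Q2 (sq_nonneg B)
  have G2 : Q ^ 2 * B ^ 2 ≤ Q ^ 2 * (1 - A ^ 2) := mul_le_mul_of_nonneg_left hB2 (sq_nonneg Q)
  have G3 : Q ^ 2 * (1 - A ^ 2) = Q ^ 2 - A ^ 2 * Q ^ 2 := by ring
  have F1 : A ^ 2 * Q ^ 2 + s ^ 2 * B ^ 2 ≤ Q ^ 2 := by linarith only [G1, G2, G3]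
  have hAQ1 : A * Q ≤ 1 := by
    have := mul_le_mul hA1 hQ1 hQ0 zero_le_one
    linarith only [this]
  have F2 : 2 * (A * Q) * (t * (M * d)) ≤ 2 * (t * (M * d)) := by
    have h0 : (0:ℝ) ≤ 2 * (t * (M * d)) := by positivity
    calc 2 * (A * Q) * (t * (M * d)) = (A * Q) * (2 * (t * (M * d))) := by ring
      _ ≤ 1 * (2 * (t * (M * d))) := mul_le_mul_of_nonneg_right hAQ1 h0
      _ = 2 * (t * (M * d)) := by ring
  have hd2 : d ^ 2 ≤ 1 := by
    have := pow_le_pow_left₀ hd0.le hd1 2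
    simpa using this
  have F3 : t ^ 2 * M ^ 2 * d ^ 2 ≤ t ^ 2 * M ^ 2 := by
    calc t ^ 2 * M ^ 2 * d ^ 2 = (t ^ 2 * M ^ 2) * d ^ 2 := by ring
      _ ≤ (t ^ 2 * M ^ 2) * 1 := mul_le_mul_of_nonneg_left hd2 (by positivity)
      _ = t ^ 2 * M ^ 2 := by ring
  have F4 : 2 * (s * B) * (t * (2 * M)) ≤ 4 * (s * (d * (t * M))) := by
    calc 2 * (s * B) * (t * (2 * M)) = (4 * (s * (t * M))) * B := by ring
      _ ≤ (4 * (s * (t * M))) * d := mul_le_mul_of_nonneg_left hBd (by positivity)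
      _ = 4 * (s * (d * (t * M))) := by ring
  have F5 : 2 * (t * (M * d)) + 4 * (s * (d * (t * M))) = t * (2 * M * (1 + 2 * s) * d) := by
    ring
  have F6 : t * (2 * M * (1 + 2 * s) * d) ≤ t * bb := mul_le_mul_of_nonneg_left hdbb ht.le
  have F7 : Q ^ 2 = 1 - 2 * (t * bb) + t ^ 2 * bb ^ 2 := by rw [hQ]; ring
  have F8 : t ^ 2 * bb ^ 2 + 5 * (t ^ 2 * M ^ 2) = t * (t * C) := by rw [hC]; ring
  have F9 : t * (t * C) ≤ t * (bb / 2) := mul_le_mul_of_nonneg_left htC ht.le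
  have S1 : (A * Q + t * (M * d)) ^ 2
      = A ^ 2 * Q ^ 2 + 2 * (A * Q) * (t * (M * d)) + t ^ 2 * M ^ 2 * d ^ 2 := by ring
  have S2 : (s * B + t * (2 * M)) ^ 2
      = s ^ 2 * B ^ 2 + 2 * (s * B) * (t * (2 * M)) + 4 * (t ^ 2 * M ^ 2) := by ring
  linarith only [S1, S2, F1, F2, F3, F4, F5, F6, F7, F8, F9]

lemma case1_arith (A B s d q : ℝ) (hA2 : A ^ 2 ≤ 1 - d ^ 2) (hAB : A ^ 2 + B ^ 2 ≤ 1)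
    (hs0 : 0 ≤ s) (hs1 : s < 1) (hq : q = 1 - (1 - s ^ 2) * d ^ 2) :
    A ^ 2 + s ^ 2 * B ^ 2 ≤ q := by
  have hs2 : s ^ 2 < 1 := by
    have h1 : s * s ≤ 1 * s := mul_le_mul_of_nonneg_right hs1.le hs0
    have h2 : s ^ 2 = s * s := sq s
    linarith only [h1, h2, hs1]
  have G1 : s ^ 2 * B ^ 2 ≤ s ^ 2 * (1 - A ^ 2) :=
    mul_le_mul_of_nonneg_left (by linarith only [hAB]) (sq_nonneg s)
  have G2 : (1 - s ^ 2) * A ^ 2 ≤ (1 - s ^ 2) * (1 - d ^ 2) :=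
    mul_le_mul_of_nonneg_left hA2 (by linarith only [hs2])
  have G3 : s ^ 2 * (1 - A ^ 2) = s ^ 2 - s ^ 2 * A ^ 2 := by ring
  have G4 : (1 - s ^ 2) * A ^ 2 = A ^ 2 - s ^ 2 * A ^ 2 := by ring
  have G5 : (1 - s ^ 2) * (1 - d ^ 2) = 1 - s ^ 2 - d ^ 2 + s ^ 2 * d ^ 2 := by ring
  have G6 : (1 - s ^ 2) * d ^ 2 = d ^ 2 - s ^ 2 * d ^ 2 := by ring
  rw [hq]
  linarith only [G1, G2, G3, G4, G5, G6]

lemma sq_le_imp_le (x y : ℝ) (hx : 0 ≤ x) (hy : 0 ≤ y) (h : x ^ 2 ≤ y ^ 2) : x ≤ y := by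
  calc x = Real.sqrt (x ^ 2) := (Real.sqrt_sq hx).symm
    _ ≤ Real.sqrt (y ^ 2) := Real.sqrt_le_sqrt h
    _ = y := Real.sqrt_sq hy

open scoped ComplexInnerProductSpace

section Helpers
variable {F : Type*} [NormedAddCommGroup F] [InnerProductSpace ℂ F]

lemma norm_eq_one_of_inner_self (v : F) (h : ⟪v, v⟫ = 1) : ‖v‖ = 1 := by
  have h2 : ((‖v‖ ^ 2 : ℝ) : ℂ) = 1 := by
    rw [← h, inner_self_eq_norm_sq_to_K]; push_cast; exact congrArg _ rfl
  have h3 : ‖v‖ ^ 2 = 1 := by exact_mod_cast h2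
  nlinarith [norm_nonneg v]

lemma pyth (X v : F) (hX : ‖X‖ = 1) :
    ‖v‖ ^ 2 = ‖⟪X, v⟫‖ ^ 2 + ‖v - ⟪X, v⟫ • X‖ ^ 2 := by
  set α := ⟪X, v⟫ with hα
  set w := v - α • X with hw
  have hXX : ⟪X, X⟫ = 1 := by
    rw [inner_self_eq_norm_sq_to_K, hX]; norm_num
  have hXw : ⟪X, w⟫ = 0 := by
    simp [hw, inner_sub_right, inner_smul_right, hXX, hX, hα]
  have hv : v = α • X + w := by simp [hw]
  have hre : ⟪α • X, w⟫ = 0 := by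
    rw [inner_smul_left, hXw, mul_zero]
  calc ‖v‖ ^ 2 = ‖α • X + w‖ ^ 2 := by rw [← hv]
    _ = ‖α • X‖ ^ 2 + 2 * RCLike.re ⟪α • X, w⟫ + ‖w‖ ^ 2 := norm_add_sq (𝕜 := ℂ) _ _
    _ = ‖α‖ ^ 2 + ‖w‖ ^ 2 := by rw [hre]; simp [norm_smul, hX]

lemma bessel2 (Y Y' u : F) (hY : ‖Y‖ = 1) (hY' : ‖Y'‖ = 1) (hYY' : ⟪Y, Y'⟫ = 0) :
    ‖⟪Y, u⟫‖ ^ 2 + ‖⟪Y', u⟫‖ ^ 2 ≤ ‖u‖ ^ 2 := by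
  have hp := pyth Y u hY
  set w := u - ⟪Y, u⟫ • Y with hw
  have hY'Y : ⟪Y', Y⟫ = 0 := by
    rw [← inner_conj_symm, hYY', map_zero]
  have h1 : ⟪Y', w⟫ = ⟪Y', u⟫ := by
    simp [hw, inner_sub_right, inner_smul_right, hY'Y]
  have h2 : ‖⟪Y', w⟫‖ ≤ ‖Y'‖ * ‖w‖ := norm_inner_le_norm _ _
  rw [h1, hY', one_mul] at h2
  nlinarith [norm_nonneg (⟪Y', u⟫ : ℂ), norm_nonneg w]

lemma norm_pair (X X' : F) (hX : ‖X‖ = 1) (hX' : ‖X'‖ = 1) (hXX' : ⟪X, X'⟫ = 0)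
    (a c : ℂ) : ‖a • X + c • X'‖ ^ 2 = ‖a‖ ^ 2 + ‖c‖ ^ 2 := by
  have hre : ⟪a • X, c • X'⟫ = 0 := by
    rw [inner_smul_left, inner_smul_right, hXX']; ring
  rw [norm_add_sq (𝕜 := ℂ), hre]
  simp [norm_smul, hX, hX']
section Key
variable {F : Type*} [NormedAddCommGroup F] [InnerProductSpace ℂ F]

lemma key_hard (X X' Y Y' : F) (hX : ‖X‖ = 1) (hX' : ‖X'‖ = 1) (hXX' : ⟪X, X'⟫ = 0)
    (hY : ‖Y‖ = 1) (hY' : ‖Y'‖ = 1) (hYY' : ⟪Y, Y'⟫ = 0)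
    (σ : ℂ) (hσ : ‖σ‖ < 1) (T S : F →L[ℂ] F)
    (hT : ∀ u, T u = ⟪Y, u⟫ • X + (σ * ⟪Y', u⟫) • X')
    (hβ : ⟪X, S Y⟫ ≠ 0) : ∃ c : ℂ, ‖T + c • S‖ < 1 := by
  have hXX : ⟪X, X⟫ = 1 := by rw [inner_self_eq_norm_sq_to_K, hX]; norm_num
  set β : ℂ := ⟪X, S Y⟫ with hβdef
  set M : ℝ := ‖S‖ with hM
  set s : ℝ := ‖σ‖ with hs
  set bb : ℝ := ‖β‖ with hbb
  have hbbpos : 0 < bb := norm_pos_iff.mpr hβ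
  have hs0 : 0 ≤ s := norm_nonneg σ
  have hbbM : bb ≤ M := by
    calc bb = ‖⟪X, S Y⟫‖ := rfl
      _ ≤ ‖X‖ * ‖S Y‖ := norm_inner_le_norm _ _
      _ = ‖S Y‖ := by rw [hX, one_mul]
      _ ≤ M * ‖Y‖ := S.le_opNorm Y
      _ = M := by rw [hY, mul_one]
  have hMpos : 0 < M := lt_of_lt_of_le hbbpos hbbM
  set d : ℝ := min 1 (bb / (2 * M * (1 + 2 * s))) with hd
  have hdpos : 0 < d := lt_min one_pos (by positivity)
  have hd1 : d ≤ 1 := min_le_left _ _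
  have hdbb : 2 * M * (1 + 2 * s) * d ≤ bb := by
    have h := min_le_right 1 (bb / (2 * M * (1 + 2 * s)))
    have hpos : (0:ℝ) < 2 * M * (1 + 2 * s) := by positivity
    calc 2 * M * (1 + 2 * s) * d
        ≤ 2 * M * (1 + 2 * s) * (bb / (2 * M * (1 + 2 * s))) :=
          mul_le_mul_of_nonneg_left h (le_of_lt hpos)
      _ = bb := by field_simp
  clear_value d
  have hs2 : s ^ 2 < 1 := by
    have h1 : s * s ≤ 1 * s := mul_le_mul_of_nonneg_right hσ.le hs0
    have h2 : s ^ 2 = s * s := sq s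
    linarith only [h1, h2, hσ]
  have hd21 : d ^ 2 ≤ 1 := by
    have := pow_le_pow_left₀ hdpos.le hd1 2
    simpa using this
  set q : ℝ := 1 - (1 - s ^ 2) * d ^ 2 with hq
  have hq0 : 0 ≤ q := by
    have e1 : (1 - s ^ 2) * d ^ 2 ≤ 1 * d ^ 2 :=
      mul_le_mul_of_nonneg_right (by linarith only [sq_nonneg s]) (sq_nonneg d)
    rw [hq]; linarith only [e1, hd21]
  have hq1 : q < 1 := by
    have h2 := mul_pos (by linarith only [hs2] : (0:ℝ) < 1 - s ^ 2)
      (by positivity : (0:ℝ) < d ^ 2)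
    rw [hq]; linarith only [h2]
  clear_value q
  set η : ℝ := 1 - Real.sqrt q with hη
  have hsqrtq : Real.sqrt q < 1 := by
    have h1 : Real.sqrt q < Real.sqrt 1 := Real.sqrt_lt_sqrt hq0 hq1
    simpa using h1
  have hηpos : 0 < η := by rw [hη]; linarith only [hsqrtq]
  have hη1 : η ≤ 1 := by
    have := Real.sqrt_nonneg q
    rw [hη]; linarith only [this]
  clear_value η
  set C : ℝ := bb ^ 2 + 5 * M ^ 2 with hC
  have hCpos : 0 < C := by positivity
  set t : ℝ := min (min ((1 - s) / bb) (bb / (2 * C))) (η / (2 * M)) with ht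
  have htpos : 0 < t := by
    refine lt_min (lt_min (div_pos (by linarith only [hσ]) hbbpos)
      (div_pos hbbpos (by positivity))) (div_pos hηpos (by positivity))
  have ht1 : t * bb ≤ 1 - s := by
    have h : t ≤ (1 - s) / bb := by
      rw [ht]; exact le_trans (min_le_left _ _) (min_le_left _ _)
    calc t * bb ≤ ((1 - s) / bb) * bb := mul_le_mul_of_nonneg_right h (le_of_lt hbbpos)
      _ = 1 - s := by field_simp
  have ht2 : t * C ≤ bb / 2 := by
    have h : t ≤ bb / (2 * C) := by
      rw [ht]; exact le_trans (min_le_left _ _) (min_le_right _ _)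
    calc t * C ≤ (bb / (2 * C)) * C := mul_le_mul_of_nonneg_right h (le_of_lt hCpos)
      _ = bb / 2 := by field_simp
  have ht3 : t * M ≤ η / 2 := by
    have h : t ≤ η / (2 * M) := by rw [ht]; exact min_le_right _ _
    calc t * M ≤ (η / (2 * M)) * M := mul_le_mul_of_nonneg_right h (le_of_lt hMpos)
      _ = η / 2 := by field_simp
  clear_value C t
  have htbb0 : 0 < t * bb := mul_pos htpos hbbpos
  have htbb1 : t * bb ≤ 1 := by linarith only [ht1, hs0]
  -- the perturbation coefficient, made opaque
  obtain ⟨c, hcnorm, hcβ⟩ : ∃ c : ℂ, ‖c‖ = t ∧ c * β = ((-(t * bb) : ℝ) : ℂ) := by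
    refine ⟨-(((t / bb : ℝ)) : ℂ) * (starRingEnd ℂ) β, ?_, ?_⟩
    · rw [norm_mul, norm_neg, Complex.norm_real, RCLike.norm_conj, Real.norm_eq_abs,
        abs_of_nonneg (by positivity), ← hbb, div_mul_cancel₀]
      exact ne_of_gt hbbpos
    · have hconj : (starRingEnd ℂ) β * β = ((bb ^ 2 : ℝ) : ℂ) := by
        rw [RCLike.conj_mul, hbb]; norm_cast
      calc -(((t / bb : ℝ)) : ℂ) * (starRingEnd ℂ) β * β
          = -(((t / bb : ℝ)) : ℂ) * ((starRingEnd ℂ) β * β) := by ring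
        _ = -(((t / bb : ℝ)) : ℂ) * ((bb ^ 2 : ℝ) : ℂ) := by rw [hconj]
        _ = ((-(t / bb * bb ^ 2) : ℝ) : ℂ) := by push_cast; ring
        _ = ((-(t * bb) : ℝ) : ℂ) := by
            have hb0 : bb ≠ 0 := ne_of_gt hbbpos
            have hrr : -(t / bb * bb ^ 2) = -(t * bb) := by field_simp
            rw [hrr]
  have h1cβ : ‖1 + c * β‖ = 1 - t * bb := by
    rw [hcβ, show ((1:ℂ) + ((-(t * bb) : ℝ) : ℂ)) = ((1 - t * bb : ℝ) : ℂ) by push_cast; ring,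
      Complex.norm_real, Real.norm_eq_abs, abs_of_nonneg (by linarith only [htbb1])]
  set K : ℝ := max (1 - η / 2) (Real.sqrt (1 - t * bb / 2)) with hK
  clear_value K
  have hKlt1 : K < 1 := by
    rw [hK]
    refine max_lt (by linarith only [hηpos]) ?_
    have h1 : Real.sqrt (1 - t * bb / 2) < Real.sqrt 1 :=
      Real.sqrt_lt_sqrt (by linarith only [htbb1]) (by linarith only [htbb0])
    simpa using h1
  have hK0 : 0 ≤ K := by
    rw [hK]; exact le_trans (by linarith only [hη1]) (le_max_left _ _)
  -- the unit-vector bound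
  have hunit : ∀ u : F, ‖u‖ = 1 → ‖T u + c • S u‖ ≤ K := by
    intro u hu
    set a : ℂ := ⟪Y, u⟫ with ha
    set b : ℂ := ⟪Y', u⟫ with hb
    have hbes : ‖a‖ ^ 2 + ‖b‖ ^ 2 ≤ 1 := by
      have := bessel2 Y Y' u hY hY' hYY'
      rw [hu] at this; simpa using this
    have hSu : ‖S u‖ ≤ M := by
      have := S.le_opNorm u; rw [hu, mul_one] at this; exact this
    have hTu2 : ‖T u‖ ^ 2 = ‖a‖ ^ 2 + s ^ 2 * ‖b‖ ^ 2 := by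
      rw [hT u, norm_pair X X' hX hX' hXX', norm_mul]; ring
    by_cases hcase : ‖a‖ ^ 2 ≤ 1 - d ^ 2
    · -- Case 1 : far from the top singular vector
      have hTu_le : ‖T u‖ ≤ Real.sqrt q := by
        have h2 : ‖T u‖ ^ 2 ≤ q := by
          rw [hTu2]
          exact case1_arith ‖a‖ ‖b‖ s d q hcase hbes hs0 hσ hq
        calc ‖T u‖ = Real.sqrt (‖T u‖ ^ 2) := (Real.sqrt_sq (norm_nonneg _)).symm
          _ ≤ Real.sqrt q := Real.sqrt_le_sqrt h2
      calc ‖T u + c • S u‖ ≤ ‖T u‖ + ‖c • S u‖ := norm_add_le _ _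
        _ = ‖T u‖ + t * ‖S u‖ := by rw [norm_smul, hcnorm]
        _ ≤ (1 - η) + t * M := by
            refine add_le_add ?_ (mul_le_mul_of_nonneg_left hSu (le_of_lt htpos))
            rw [hη]; linarith only [hTu_le]
        _ ≤ 1 - η / 2 := by linarith only [ht3]
        _ ≤ K := by rw [hK]; exact le_max_left _ _
    · -- Case 2 : close to the top singular vector
      push_neg at hcase
      have ha1 : ‖a‖ ≤ 1 :=
        sq_le_imp_le _ _ (norm_nonneg a) zero_le_one
          (by simpa using (by linarith only [hbes, sq_nonneg ‖b‖] : ‖a‖ ^ 2 ≤ 1))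
      have hbd : ‖b‖ ≤ d :=
        sq_le_imp_le _ _ (norm_nonneg b) hdpos.le (by linarith only [hbes, hcase])
      set w0 : F := u - a • Y with hw0
      have hw0d : ‖w0‖ ≤ d := by
        have hp := pyth Y u hY
        rw [hu, ← ha, ← hw0] at hp
        exact sq_le_imp_le _ _ (norm_nonneg w0) hdpos.le
          (by linarith only [hp, hcase, sq_nonneg ‖a‖, one_pow (M := ℝ) 2])
      set r : ℂ := ⟪X, S w0⟫ with hr
      have hrMd : ‖r‖ ≤ M * d := by
        calc ‖r‖ ≤ ‖X‖ * ‖S w0‖ := norm_inner_le_norm _ _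
          _ = ‖S w0‖ := by rw [hX, one_mul]
          _ ≤ M * ‖w0‖ := S.le_opNorm w0
          _ ≤ M * d := mul_le_mul_of_nonneg_left hw0d (le_of_lt hMpos)
      have hXSu : ⟪X, S u⟫ = r + a * β := by
        have hsplit : S u = S w0 + a • S Y := by
          rw [hw0, map_sub, map_smul]; abel
        rw [hsplit, inner_add_right, inner_smul_right, hr, hβdef]
      have hXTu : ⟪X, T u⟫ = a := by
        rw [hT u, inner_add_right, inner_smul_right, inner_smul_right, hXX, hXX']
        ring
      have hXv : ⟪X, T u + c • S u⟫ = a * (1 + c * β) + c * r := by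
        rw [inner_add_right, inner_smul_right, hXTu, hXSu]; ring
      have hα : ‖⟪X, T u + c • S u⟫‖ ≤ ‖a‖ * (1 - t * bb) + t * (M * d) := by
        rw [hXv]
        calc ‖a * (1 + c * β) + c * r‖ ≤ ‖a * (1 + c * β)‖ + ‖c * r‖ := norm_add_le _ _
          _ = ‖a‖ * (1 - t * bb) + t * ‖r‖ := by rw [norm_mul, norm_mul, h1cβ, hcnorm]
          _ ≤ ‖a‖ * (1 - t * bb) + t * (M * d) :=
              add_le_add le_rfl (mul_le_mul_of_nonneg_left hrMd (le_of_lt htpos))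
      have hw_eq : (T u + c • S u) - ⟪X, T u + c • S u⟫ • X
          = (σ * b) • X' + c • (S u - ⟪X, S u⟫ • X) := by
        rw [hXv, hXSu, hT u, ← ha, ← hb]
        module
      have hw_norm : ‖(T u + c • S u) - ⟪X, T u + c • S u⟫ • X‖
          ≤ s * ‖b‖ + t * (2 * M) := by
        rw [hw_eq]
        have h2 : ‖⟪X, S u⟫‖ ≤ M := by
          calc ‖⟪X, S u⟫‖ ≤ ‖X‖ * ‖S u‖ := norm_inner_le_norm _ _
            _ = ‖S u‖ := by rw [hX, one_mul]
            _ ≤ M := hSu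
        calc ‖(σ * b) • X' + c • (S u - ⟪X, S u⟫ • X)‖
            ≤ ‖(σ * b) • X'‖ + ‖c • (S u - ⟪X, S u⟫ • X)‖ := norm_add_le _ _
          _ = ‖σ * b‖ * ‖X'‖ + ‖c‖ * ‖S u - ⟪X, S u⟫ • X‖ := by rw [norm_smul, norm_smul]
          _ ≤ s * ‖b‖ + t * (2 * M) := by
              rw [hX', mul_one, norm_mul, hcnorm]
              refine add_le_add le_rfl (mul_le_mul_of_nonneg_left ?_ (le_of_lt htpos))
              calc ‖S u - ⟪X, S u⟫ • X‖ ≤ ‖S u‖ + ‖⟪X, S u⟫ • X‖ := norm_sub_le _ _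
                _ = ‖S u‖ + ‖⟪X, S u⟫‖ := by rw [norm_smul, hX, mul_one]
                _ ≤ 2 * M := by linarith only [hSu, h2]
      have hvsq : ‖T u + c • S u‖ ^ 2
          = ‖⟪X, T u + c • S u⟫‖ ^ 2 + ‖(T u + c • S u) - ⟪X, T u + c • S u⟫ • X‖ ^ 2 :=
        pyth X (T u + c • S u) hX
      have hαsq : ‖⟪X, T u + c • S u⟫‖ ^ 2 ≤ (‖a‖ * (1 - t * bb) + t * (M * d)) ^ 2 :=
        pow_le_pow_left₀ (norm_nonneg _) hα 2
      have hwsq : ‖(T u + c • S u) - ⟪X, T u + c • S u⟫ • X‖ ^ 2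
          ≤ (s * ‖b‖ + t * (2 * M)) ^ 2 :=
        pow_le_pow_left₀ (norm_nonneg _) hw_norm 2
      have hbig := case2_arith ‖a‖ ‖b‖ s (1 - t * bb) t M d bb C (norm_nonneg a) ha1
        (norm_nonneg b) hbd hbes hs0 rfl (by linarith only [ht1]) (by linarith only [htbb1])
        htpos hMpos hdpos hd1 hdbb hC ht2
      have hfin : ‖T u + c • S u‖ ^ 2 ≤ 1 - t * bb / 2 := by
        rw [hvsq]
        linarith only [hαsq, hwsq, hbig]
      calc ‖T u + c • S u‖ = Real.sqrt (‖T u + c • S u‖ ^ 2) :=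
            (Real.sqrt_sq (norm_nonneg _)).symm
        _ ≤ Real.sqrt (1 - t * bb / 2) := Real.sqrt_le_sqrt hfin
        _ ≤ K := by rw [hK]; exact le_max_right _ _
  -- pass to the operator norm
  refine ⟨c, lt_of_le_of_lt ?_ hKlt1⟩
  refine ContinuousLinearMap.opNorm_le_bound _ hK0 (fun u => ?_)
  rcases eq_or_ne u 0 with rfl | hu0
  · simp
  · have hnu : (0:ℝ) < ‖u‖ := norm_pos_iff.mpr hu0
    set v : F := ‖u‖⁻¹ • u with hvdef
    have hv1 : ‖v‖ = 1 := by
      rw [hvdef, norm_smul, norm_inv, norm_norm, inv_mul_cancel₀ (ne_of_gt hnu)]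
    have huv : u = ‖u‖ • v := by
      rw [hvdef, smul_smul, mul_inv_cancel₀ (ne_of_gt hnu), one_smul]
    have hb := hunit v hv1
    calc ‖(T + c • S) u‖ = ‖(T + c • S) (‖u‖ • v)‖ := by rw [← huv]
      _ = ‖u‖ * ‖(T + c • S) v‖ := by
          rw [ContinuousLinearMap.map_smul_of_tower, norm_smul, Real.norm_eq_abs, abs_norm]
      _ = ‖u‖ * ‖T v + c • S v‖ := by
          rw [ContinuousLinearMap.add_apply, ContinuousLinearMap.smul_apply]
      _ ≤ ‖u‖ * K := mul_le_mul_of_nonneg_left hb (le_of_lt hnu)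
      _ = K * ‖u‖ := mul_comm _ _

lemma key_facts (X X' Y Y' : F) (hX : ‖X‖ = 1) (hX' : ‖X'‖ = 1) (hXX' : ⟪X, X'⟫ = 0)
    (hY : ‖Y‖ = 1) (hY' : ‖Y'‖ = 1) (hYY' : ⟪Y, Y'⟫ = 0)
    (σ : ℂ) (hσ : ‖σ‖ < 1) (T : F →L[ℂ] F)
    (hT : ∀ u, T u = ⟪Y, u⟫ • X + (σ * ⟪Y', u⟫) • X') :
    T Y = X ∧ ‖T‖ ≤ 1 ∧ 1 ≤ ‖T‖ := by
  have hYY : ⟪Y, Y⟫ = 1 := by rw [inner_self_eq_norm_sq_to_K, hY]; norm_num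
  have hY'Y : ⟪Y', Y⟫ = 0 := by rw [← inner_conj_symm, hYY', map_zero]
  have hTY : T Y = X := by rw [hT, hYY, hY'Y, mul_zero, zero_smul, add_zero, one_smul]
  have hTle : ‖T‖ ≤ 1 := by
    refine ContinuousLinearMap.opNorm_le_bound _ zero_le_one (fun u => ?_)
    rw [one_mul]
    have h1 : ‖T u‖ ^ 2 = ‖⟪Y, u⟫‖ ^ 2 + ‖σ * ⟪Y', u⟫‖ ^ 2 := by
      rw [hT]; exact norm_pair X X' hX hX' hXX' _ _
    have h2 := bessel2 Y Y' u hY hY' hYY'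
    have h3 : ‖σ * ⟪Y', u⟫‖ ≤ ‖⟪Y', u⟫‖ := by
      rw [norm_mul]
      calc ‖σ‖ * ‖⟪Y', u⟫‖ ≤ 1 * ‖⟪Y', u⟫‖ :=
            mul_le_mul_of_nonneg_right hσ.le (norm_nonneg _)
        _ = ‖⟪Y', u⟫‖ := one_mul _
    have h4 : ‖σ * ⟪Y', u⟫‖ ^ 2 ≤ ‖⟪Y', u⟫‖ ^ 2 := pow_le_pow_left₀ (norm_nonneg _) h3 2
    exact sq_le_imp_le _ _ (norm_nonneg _) (norm_nonneg _) (by linarith only [h1, h2, h4])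
  have hTge : 1 ≤ ‖T‖ := by
    have := T.le_opNorm Y
    rw [hTY, hX, hY, mul_one] at this
    exact this
  exact ⟨hTY, hTle, hTge⟩

lemma key_iff (X X' Y Y' : F) (hX : ‖X‖ = 1) (hX' : ‖X'‖ = 1) (hXX' : ⟪X, X'⟫ = 0)
    (hY : ‖Y‖ = 1) (hY' : ‖Y'‖ = 1) (hYY' : ⟪Y, Y'⟫ = 0)
    (σ : ℂ) (hσ : ‖σ‖ < 1) (T S : F →L[ℂ] F)
    (hT : ∀ u, T u = ⟪Y, u⟫ • X + (σ * ⟪Y', u⟫) • X') :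
    (∀ c : ℂ, ‖T‖ ≤ ‖T + c • S‖) ↔ ⟪X, S Y⟫ = 0 := by
  obtain ⟨hTY, hTle, hTge⟩ := key_facts X X' Y Y' hX hX' hXX' hY hY' hYY' σ hσ T hT
  constructor
  · intro hBJ
    by_contra hβ
    obtain ⟨c, hc⟩ := key_hard X X' Y Y' hX hX' hXX' hY hY' hYY' σ hσ T S hT hβ
    exact absurd (le_trans hTge (hBJ c)) (not_le.mpr hc)
  · intro hβ c
    have h1 : ⟪X, T Y + c • S Y⟫ = 1 := by
      rw [inner_add_right, inner_smul_right, hTY, hβ, mul_zero, add_zero,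
        inner_self_eq_norm_sq_to_K, hX]
      norm_num
    have h2 : (1:ℝ) ≤ ‖(T + c • S) Y‖ := by
      have h3 : ‖⟪X, T Y + c • S Y⟫‖ ≤ ‖X‖ * ‖T Y + c • S Y‖ := norm_inner_le_norm _ _
      rw [h1, hX, one_mul] at h3
      simpa [ContinuousLinearMap.add_apply, ContinuousLinearMap.smul_apply] using h3
    have h4 : ‖(T + c • S) Y‖ ≤ ‖T + c • S‖ := by
      have := (T + c • S).le_opNorm Y
      rw [hY, mul_one] at this
      exact this
    linarith only [hTle, h2, h4]

end Key

open Matrix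

lemma mulVec_vecMulVec_helper {n : ℕ} (x sy u : Fin n → ℂ) :
    (Matrix.vecMulVec x sy).mulVec u = (dotProduct sy u) • x := by
  funext i
  simp only [Matrix.mulVec, Matrix.vecMulVec_apply, dotProduct, Pi.smul_apply,
    smul_eq_mul]
  calc ∑ j, x i * sy j * u j = ∑ j, (sy j * u j) * x i := by
        apply Finset.sum_congr rfl; intros; ring
    _ = (∑ j, sy j * u j) * x i := (Finset.sum_mul _ _ _).symm

/-- The operator (spectral) norm of a complex matrix, induced by the Euclidean norm on `ℂⁿ`. -/
noncomputable def opNorm {n : ℕ} (A : Matrix (Fin n) (Fin n) ℂ) : ℝ :=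
  ‖Matrix.toEuclideanCLM (𝕜 := ℂ) (n := Fin n) A‖

/-- Birkhoff–James orthogonality of matrices with respect to the operator norm. -/
def BJ {n : ℕ} (A B : Matrix (Fin n) (Fin n) ℂ) : Prop :=
  ∀ c : ℂ, opNorm A ≤ opNorm (A + c • B)

/-- For `A = x y* + σ x'(y')*` with orthonormal pairs and `|σ| < 1`, the outgoing
BJ-neighbourhood of `A` equals that of `x y*`: `A ⊥ B ↔ x* B y = 0`. -/
theorem stmt15 {n : ℕ} (x x' y y' : Fin n → ℂ)
    (hx : dotProduct (star x) x = 1)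
    (hx' : dotProduct (star x') x' = 1)
    (hxx' : dotProduct (star x) x' = 0)
    (hy : dotProduct (star y) y = 1)
    (hy' : dotProduct (star y') y' = 1)
    (hyy' : dotProduct (star y) y' = 0)
    (σ : ℂ) (hσ : ‖σ‖ < 1)
    (A : Matrix (Fin n) (Fin n) ℂ)
    (hA : A = Matrix.vecMulVec x (star y) + σ • Matrix.vecMulVec x' (star y')) :
    ∀ B : Matrix (Fin n) (Fin n) ℂ,
      BJ A B ↔ dotProduct (star x) (B.mulVec y) = 0 := by
  intro B
  set e : (Fin n → ℂ) ≃ EuclideanSpace ℂ (Fin n) := (WithLp.equiv 2 (Fin n → ℂ)).symm with he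
  set T := Matrix.toEuclideanCLM (𝕜 := ℂ) (n := Fin n) A with hTdef
  set S := Matrix.toEuclideanCLM (𝕜 := ℂ) (n := Fin n) B with hSdef
  set X : EuclideanSpace ℂ (Fin n) := e x with hXdef
  set X' : EuclideanSpace ℂ (Fin n) := e x' with hX'def
  set Y : EuclideanSpace ℂ (Fin n) := e y with hYdef
  set Y' : EuclideanSpace ℂ (Fin n) := e y' with hY'def
  have hinner : ∀ v w : Fin n → ℂ, ⟪e v, e w⟫ = dotProduct (star v) w :=
    fun v w => by rw [dotProduct_comm]; exact EuclideanSpace.inner_toLp_toLp v w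
  have hXn : ‖X‖ = 1 := norm_eq_one_of_inner_self X (by rw [hXdef, hinner]; exact hx)
  have hX'n : ‖X'‖ = 1 := norm_eq_one_of_inner_self X' (by rw [hX'def, hinner]; exact hx')
  have hYn : ‖Y‖ = 1 := norm_eq_one_of_inner_self Y (by rw [hYdef, hinner]; exact hy)
  have hY'n : ‖Y'‖ = 1 := norm_eq_one_of_inner_self Y' (by rw [hY'def, hinner]; exact hy')
  have hXX' : ⟪X, X'⟫ = 0 := by rw [hXdef, hX'def, hinner]; exact hxx'
  have hYY' : ⟪Y, Y'⟫ = 0 := by rw [hYdef, hY'def, hinner]; exact hyy'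
  -- the action of T
  have hmulVec : ∀ u0 : Fin n → ℂ, A.mulVec u0 =
      (dotProduct (star y) u0) • x + (σ * dotProduct (star y') u0) • x' := by
    intro u0
    rw [hA, Matrix.add_mulVec, Matrix.smul_mulVec, mulVec_vecMulVec_helper,
      mulVec_vecMulVec_helper, smul_smul]
  have hTact : ∀ u : EuclideanSpace ℂ (Fin n),
      T u = ⟪Y, u⟫ • X + (σ * ⟪Y', u⟫) • X' := by
    intro u
    have hu : u = e (WithLp.equiv 2 (Fin n → ℂ) u) := (Equiv.symm_apply_apply _ u).symm
    rw [hu]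
    set u0 := WithLp.equiv 2 (Fin n → ℂ) u with hu0
    have h1 : T (e u0) = e (A.mulVec u0) := by
      rw [hTdef, he]
      exact Matrix.toEuclideanCLM_toLp A u0
    rw [h1, hmulVec u0, hYdef, hY'def, hinner, hinner, hXdef, hX'def, he]
    simp only [WithLp.equiv_symm_apply, WithLp.toLp_add, WithLp.toLp_smul]
  -- identification of the inner product with the matrix pairing
  have hβ : ⟪X, S Y⟫ = dotProduct (star x) (B.mulVec y) := by
    have h1 : S Y = e (B.mulVec y) := by
      rw [hSdef, hYdef, he]
      exact Matrix.toEuclideanCLM_toLp B y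
    rw [h1, hXdef, hinner]
  -- identification of BJ with the CLM statement
  have hadd : ∀ c : ℂ, Matrix.toEuclideanCLM (𝕜 := ℂ) (n := Fin n) (A + c • B) = T + c • S := by
    intro c
    refine ContinuousLinearMap.ext fun u => ?_
    apply (WithLp.equiv 2 (Fin n → ℂ)).injective
    rw [WithLp.equiv_apply, Matrix.ofLp_toEuclideanCLM, Matrix.add_mulVec,
      Matrix.smul_mulVec, ContinuousLinearMap.add_apply,
      ContinuousLinearMap.smul_apply, WithLp.equiv_apply, WithLp.ofLp_add, WithLp.ofLp_smul, hTdef, hSdef,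
      Matrix.ofLp_toEuclideanCLM, Matrix.ofLp_toEuclideanCLM]
  have hBJ : BJ A B ↔ ∀ c : ℂ, ‖T‖ ≤ ‖T + c • S‖ := by
    unfold BJ opNorm
    refine forall_congr' fun c => ?_
    rw [hadd c, ← hTdef]
  rw [hBJ, ← hβ]
  exact key_iff X X' Y Y' hXn hX'n hXX' hYn hY'n hYY' σ
    hσ T S hTact
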